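/- For every natural number d there exists a constant C > 0 (depending only on d) such that for all real B > 0 and all T with 0 < T ≤ B: ∫_0^T s^{−d} exp(−B/s) ds ≤ C · B⁻¹ · T^{2−d} · exp(−B/T). (Here the exponent 2 − d is taken as a real exponent.) -/

import Mathlib

open MeasureTheory Real

private lemma key_ineq (d : ℕ) {B T s : ℝ} (hB : 0 < B) (hs : 0 < s) (hsT : s ≤ T)
    (hTB : T ≤ B) :
    s ^ ((2 : ℝ) - d) ≤ (4 : ℝ) ^ d * (d.factorial + 1) *
      (T ^ ((2 : ℝ) - d) * Real.exp (B / (2 * s) - B / (2 * T))) := by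
  have hT : 0 < T := hs.trans_le hsT
  set t : ℝ := B / (2 * s) - B / (2 * T) with ht_def
  have ht : 0 ≤ t := by
    have h : B / (2 * T) ≤ B / (2 * s) := by gcongr
    rw [ht_def]
    exact sub_nonneg.mpr h
  have hx1 : 1 ≤ T / s := (one_le_div hs).mpr hsT
  have h2t : T / s ≤ 1 + 2 * t := by
    have h2t' : 2 * t = B / s - B / T := by
      rw [ht_def]; field_simp
    have hd : (T - s) / s ≤ B / s - B / T := by
      rw [div_sub_div _ _ hs.ne' hT.ne', div_le_div_iff₀ hs (by positivity)]
      nlinarith [mul_nonneg (mul_nonneg (sub_nonneg.mpr hTB) (sub_nonneg.mpr hsT)) hs.le]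
    have hTs : T / s = 1 + (T - s) / s := by field_simp; ring
    linarith
  have hstep1 : (T / s) ^ ((d : ℝ) - 2) ≤ (T / s) ^ (d : ℕ) := by
    rw [← Real.rpow_natCast (T / s) d]
    exact Real.rpow_le_rpow_of_exponent_le hx1 (by linarith)
  have hstep2 : (T / s) ^ (d : ℕ) ≤ (1 + 2 * t) ^ d :=
    pow_le_pow_left₀ (by positivity) h2t d
  have hstep3 : (1 + 2 * t) ^ d ≤ 4 ^ d * (1 + t ^ d) := by
    rcases le_total t 1 with h | h
    · have h3 : (1 + 2 * t) ^ d ≤ 3 ^ d := pow_le_pow_left₀ (by linarith) (by linarith) d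
      have h4 : (3 : ℝ) ^ d ≤ 4 ^ d := pow_le_pow_left₀ (by norm_num) (by norm_num) d
      have h5 : (4 : ℝ) ^ d ≤ 4 ^ d * (1 + t ^ d) := by
        have : (0:ℝ) ≤ t ^ d := by positivity
        nlinarith [pow_pos (show (0:ℝ) < 4 by norm_num) d]
      linarith
    · have h3 : (1 + 2 * t) ^ d ≤ (4 * t) ^ d := pow_le_pow_left₀ (by linarith) (by linarith) d
      have h4 : (4 * t) ^ d = 4 ^ d * t ^ d := mul_pow 4 t d
      have h5 : (4:ℝ) ^ d * t ^ d ≤ 4 ^ d * (1 + t ^ d) := by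
        have : (0:ℝ) < 4 ^ d := by positivity
        nlinarith
      linarith
  have hstep4 : t ^ d ≤ d.factorial * Real.exp t := by
    have := Real.sum_le_exp_of_nonneg ht (d + 1)
    have hterm : t ^ d / d.factorial ≤ ∑ i ∈ Finset.range (d + 1), t ^ i / i.factorial := by
      exact Finset.single_le_sum (f := fun i => t ^ i / (i.factorial : ℝ))
        (fun i _ => by positivity) (Finset.self_mem_range_succ d)
    have hfac : (0:ℝ) < d.factorial := by positivity
    rw [div_le_iff₀ hfac] at hterm
    calc t ^ d ≤ (∑ i ∈ Finset.range (d + 1), t ^ i / i.factorial) * d.factorial := hterm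
      _ ≤ Real.exp t * d.factorial := by
          apply mul_le_mul_of_nonneg_right this hfac.le
      _ = d.factorial * Real.exp t := by ring
  have hstep5 : (1:ℝ) + t ^ d ≤ (d.factorial + 1) * Real.exp t := by
    have h1 : (1:ℝ) ≤ Real.exp t := Real.one_le_exp ht
    nlinarith
  -- combine
  have hmain : (T / s) ^ ((d : ℝ) - 2) ≤ 4 ^ d * (d.factorial + 1) * Real.exp t := by
    calc (T / s) ^ ((d : ℝ) - 2) ≤ (1 + 2 * t) ^ d := hstep1.trans hstep2
      _ ≤ 4 ^ d * (1 + t ^ d) := hstep3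
      _ ≤ 4 ^ d * ((d.factorial + 1) * Real.exp t) := by
          have : (0:ℝ) < 4 ^ d := by positivity
          nlinarith
      _ = 4 ^ d * (d.factorial + 1) * Real.exp t := by ring
  have hconv : s ^ ((2 : ℝ) - d) = (T / s) ^ ((d : ℝ) - 2) * T ^ ((2 : ℝ) - d) := by
    have hTs0 : (0:ℝ) < T / s := by positivity
    rw [show ((d : ℝ) - 2) = -((2:ℝ) - d) by ring, Real.rpow_neg hTs0.le,
      Real.div_rpow hT.le hs.le]
    have hs0 : (0:ℝ) < s ^ ((2:ℝ) - d) := Real.rpow_pos_of_pos hs _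
    have hT0 : (0:ℝ) < T ^ ((2:ℝ) - d) := Real.rpow_pos_of_pos hT _
    field_simp
  rw [hconv]
  calc (T / s) ^ ((d : ℝ) - 2) * T ^ ((2 : ℝ) - d)
      ≤ (4 ^ d * (d.factorial + 1) * Real.exp t) * T ^ ((2 : ℝ) - d) := by
        apply mul_le_mul_of_nonneg_right hmain (Real.rpow_pos_of_pos hT _).le
    _ = 4 ^ d * (d.factorial + 1) * (T ^ ((2 : ℝ) - d) * Real.exp t) := by ring

private lemma antideriv_int {b T : ℝ} (hb : 0 < b) (hT : 0 < T) :
    IntegrableOn (fun s : ℝ => (s ^ 2)⁻¹ * Real.exp (-b / s)) (Set.Ioo 0 T) volume ∧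
    ∫ s in Set.Ioo (0 : ℝ) T, (s ^ 2)⁻¹ * Real.exp (-b / s) = b⁻¹ * Real.exp (-b / T) := by
  set f' : ℝ → ℝ := fun s => (s ^ 2)⁻¹ * Real.exp (-b / s) with hf'
  set F : ℝ → ℝ := fun x => if x ≤ 0 then 0 else b⁻¹ * Real.exp (-b / x) with hF
  -- bound: f' x ≤ 4 / b^2 for x > 0
  have hbound : ∀ x : ℝ, 0 < x → |f' x| ≤ 4 / b ^ 2 := by
    intro x hx
    have h1 : Real.exp (-b / x) ≤ 4 * x ^ 2 / b ^ 2 := by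
      have h2 : (1 : ℝ) + b / (2 * x) ≤ Real.exp (b / (2 * x)) := by
        have := Real.add_one_le_exp (b / (2 * x)); linarith
      have h3 : b / (2 * x) ≤ Real.exp (b / (2 * x)) := by
        have : (0:ℝ) < b / (2 * x) := by positivity
        linarith
      have h4 : (b / (2 * x)) ^ 2 ≤ Real.exp (b / (2 * x)) ^ 2 := by
        have h0 : (0:ℝ) ≤ b / (2 * x) := by positivity
        exact pow_le_pow_left₀ h0 h3 2
      have h5 : Real.exp (b / (2 * x)) ^ 2 = Real.exp (b / x) := by
        rw [← Real.exp_nat_mul]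
        congr 1; field_simp; ring
      have h6 : b ^ 2 / (4 * x ^ 2) ≤ Real.exp (b / x) := by
        rw [← h5]
        calc b ^ 2 / (4 * x ^ 2) = (b / (2 * x)) ^ 2 := by ring
          _ ≤ _ := h4
      have h7 : Real.exp (-b / x) = (Real.exp (b / x))⁻¹ := by
        rw [← Real.exp_neg]; congr 1; ring
      rw [h7]
      rw [inv_le_comm₀ (Real.exp_pos _) (by positivity)]
      calc (4 * x ^ 2 / b ^ 2)⁻¹ = b ^ 2 / (4 * x ^ 2) := by
            field_simp
        _ ≤ Real.exp (b / x) := h6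
    have hnn : 0 ≤ f' x := by
      simp only [hf']; positivity
    rw [abs_of_nonneg hnn]
    simp only [hf']
    calc (x ^ 2)⁻¹ * Real.exp (-b / x) ≤ (x ^ 2)⁻¹ * (4 * x ^ 2 / b ^ 2) := by
          apply mul_le_mul_of_nonneg_left h1 (by positivity)
      _ = 4 / b ^ 2 := by field_simp
  have hmeas : AEStronglyMeasurable f' (volume.restrict (Set.Ioo (0:ℝ) T)) := by
    apply Measurable.aestronglyMeasurable
    simp only [hf']
    fun_prop
  have hint : IntegrableOn f' (Set.Ioo 0 T) volume := by
    apply Integrable.mono' (integrableOn_const (C := 4 / b ^ 2) (by simp [Real.volume_Ioo]))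
      hmeas
    filter_upwards [ae_restrict_mem measurableSet_Ioo] with x hx
    exact hbound x hx.1
  refine ⟨hint, ?_⟩
  -- limit of exp(-b/x) as x → 0+
  have hlim : Filter.Tendsto (fun x : ℝ => Real.exp (-b / x)) (nhdsWithin 0 (Set.Ioi 0))
      (nhds 0) := by
    apply Real.tendsto_exp_atBot.comp
    have h1 : Filter.Tendsto (fun x : ℝ => b * x⁻¹) (nhdsWithin 0 (Set.Ioi 0)) Filter.atTop :=
      Filter.Tendsto.const_mul_atTop hb tendsto_inv_nhdsGT_zero
    have h2 : Filter.Tendsto (fun x : ℝ => -(b * x⁻¹)) (nhdsWithin 0 (Set.Ioi 0))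
        Filter.atBot := Filter.tendsto_neg_atBot_iff.mpr h1
    convert h2 using 2 with x
    ring
  have hcont : ContinuousOn F (Set.Icc 0 T) := by
    intro x hx
    rcases eq_or_lt_of_le hx.1 with h0 | h0
    · -- x = 0
      subst h0
      have hsub : Set.Icc (0:ℝ) T \ {0} ⊆ Set.Ioi 0 := fun y hy =>
        lt_of_le_of_ne hy.1.1 (Ne.symm hy.2)
      have htend : Filter.Tendsto F (nhdsWithin 0 (Set.Ioi 0)) (nhds 0) := by
        have h2 : Filter.Tendsto (fun y : ℝ => b⁻¹ * Real.exp (-b / y))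
            (nhdsWithin 0 (Set.Ioi 0)) (nhds (b⁻¹ * 0)) := hlim.const_mul b⁻¹
        rw [mul_zero] at h2
        refine h2.congr' (Filter.eventuallyEq_of_mem self_mem_nhdsWithin fun y hy => ?_)
        simp [hF, not_le.mpr (Set.mem_Ioi.mp hy)]
      have hcw : ContinuousWithinAt F (Set.Icc 0 T \ {0}) 0 := by
        rw [ContinuousWithinAt, show F 0 = 0 by simp [hF]]
        exact htend.mono_left (nhdsWithin_mono _ hsub)
      exact continuousWithinAt_diff_self.mp hcw
    · -- x > 0
      have hg : ContinuousAt (fun x : ℝ => b⁻¹ * Real.exp (-b / x)) x := by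
        apply ContinuousAt.mul continuousAt_const
        apply Real.continuous_exp.continuousAt.comp
        exact (continuousAt_const.div continuousAt_id h0.ne')
      have heq : F =ᶠ[nhds x] fun x => b⁻¹ * Real.exp (-b / x) := by
        filter_upwards [IsOpen.mem_nhds isOpen_Ioi h0] with y hy
        simp [hF, not_le.mpr (Set.mem_Ioi.mp hy)]
      exact (hg.congr heq.symm).continuousWithinAt
  have hderiv : ∀ x ∈ Set.Ioo (0:ℝ) T, HasDerivWithinAt F (f' x) (Set.Ioi x) x := by
    intro x hx
    have hx0 : 0 < x := hx.1
    have h1 : HasDerivAt (fun y : ℝ => -b / y) (b * (x ^ 2)⁻¹) x := by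
      have h2 := (hasDerivAt_inv hx0.ne').const_mul (-b)
      have he : -b * -(x ^ 2)⁻¹ = b * (x ^ 2)⁻¹ := by ring
      rw [he] at h2
      exact h2
    have h4 : HasDerivAt (fun y : ℝ => b⁻¹ * Real.exp (-b / y))
        (b⁻¹ * (Real.exp (-b / x) * (b * (x ^ 2)⁻¹))) x := ((h1.exp).const_mul b⁻¹)
    have h5 : b⁻¹ * (Real.exp (-b / x) * (b * (x ^ 2)⁻¹)) = f' x := by
      simp only [hf']; field_simp
    rw [h5] at h4
    have heq : F =ᶠ[nhds x] fun y => b⁻¹ * Real.exp (-b / y) := by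
      filter_upwards [IsOpen.mem_nhds isOpen_Ioi hx0] with y hy
      simp [hF, not_le.mpr (Set.mem_Ioi.mp hy)]
    exact ((h4.congr_of_eventuallyEq heq).hasDerivWithinAt)
  have hii : IntervalIntegrable f' volume 0 T := by
    rw [intervalIntegrable_iff_integrableOn_Ioo_of_le hT.le]
    exact hint
  have hFTC := intervalIntegral.integral_eq_sub_of_hasDeriv_right_of_le hT.le hcont hderiv hii
  rw [intervalIntegral.integral_of_le hT.le, integral_Ioc_eq_integral_Ioo] at hFTC
  rw [hFTC]
  simp [hF, not_le.mpr hT]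

theorem integral_inv_pow_exp_bound (d : ℕ) :
    ∃ C : ℝ, 0 < C ∧ ∀ B : ℝ, 0 < B → ∀ T : ℝ, 0 < T → T ≤ B →
      ∫ s in Set.Ioo (0 : ℝ) T, s ^ (-(d : ℝ)) * Real.exp (-B / s) ≤
        C * B⁻¹ * T ^ ((2 : ℝ) - d) * Real.exp (-B / T) := by
  refine ⟨2 * ((4:ℝ) ^ d * (d.factorial + 1)), by positivity, ?_⟩
  intro B hB T hT hTB
  set M : ℝ := (4:ℝ) ^ d * (d.factorial + 1) with hM
  have hM0 : 0 < M := by positivity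
  have hb : 0 < B / 2 := by linarith
  obtain ⟨hint, hval⟩ := antideriv_int hb hT
  set K : ℝ := M * T ^ ((2:ℝ) - d) * Real.exp (-(B/2) / T) with hK
  have hK0 : 0 < K := by positivity
  have hpt : ∀ s ∈ Set.Ioo (0:ℝ) T, s ^ (-(d:ℝ)) * Real.exp (-B / s) ≤
      K * ((s ^ 2)⁻¹ * Real.exp (-(B/2) / s)) := by
    intro s hs
    have hs0 : 0 < s := hs.1
    have hsT : s ≤ T := hs.2.le
    have key := key_ineq d hB hs0 hsT hTB
    have h1 : s ^ ((2:ℝ) - d) * Real.exp (-(B/2) / s) ≤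
        M * T ^ ((2:ℝ)-d) * Real.exp (-(B/2)/T) := by
      have h0 := mul_le_mul_of_nonneg_right key (Real.exp_nonneg (-(B/2)/s))
      calc s ^ ((2:ℝ)-d) * Real.exp (-(B/2)/s)
          ≤ M * (T ^ ((2:ℝ)-d) * Real.exp (B/(2*s) - B/(2*T))) * Real.exp (-(B/2)/s) := h0
        _ = M * T ^ ((2:ℝ)-d) *
            (Real.exp (B/(2*s) - B/(2*T)) * Real.exp (-(B/2)/s)) := by ring
        _ = M * T ^ ((2:ℝ)-d) * Real.exp (-(B/2)/T) := by
            rw [← Real.exp_add]; congr 1; ring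
    have h2 : s ^ (-(d:ℝ)) = s ^ ((2:ℝ)-d) * (s^2)⁻¹ := by
      rw [← Real.rpow_natCast s 2, ← Real.rpow_neg hs0.le, ← Real.rpow_add hs0]
      congr 1; push_cast; ring
    have h3 : Real.exp (-B / s) = Real.exp (-(B/2)/s) * Real.exp (-(B/2)/s) := by
      rw [← Real.exp_add]; congr 1; ring
    calc s ^ (-(d:ℝ)) * Real.exp (-B / s)
        = (s ^ ((2:ℝ)-d) * Real.exp (-(B/2)/s)) * ((s^2)⁻¹ * Real.exp (-(B/2)/s)) := by
          rw [h2, h3]; ring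
      _ ≤ (M * T ^ ((2:ℝ)-d) * Real.exp (-(B/2)/T)) *
          ((s^2)⁻¹ * Real.exp (-(B/2)/s)) := by
          apply mul_le_mul_of_nonneg_right h1 (by positivity)
      _ = K * ((s^2)⁻¹ * Real.exp (-(B/2)/s)) := by rw [hK]
  have hle : ∫ s in Set.Ioo (0:ℝ) T, s ^ (-(d:ℝ)) * Real.exp (-B / s) ≤
      ∫ s in Set.Ioo (0:ℝ) T, K * ((s^2)⁻¹ * Real.exp (-(B/2)/s)) := by
    apply integral_mono_of_nonneg
    · filter_upwards [ae_restrict_mem measurableSet_Ioo] with s hs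
      have hs0 : 0 < s := hs.1
      positivity
    · exact hint.const_mul K
    · filter_upwards [ae_restrict_mem measurableSet_Ioo] with s hs
      exact hpt s hs
  have hcalc : ∫ s in Set.Ioo (0:ℝ) T, K * ((s^2)⁻¹ * Real.exp (-(B/2)/s)) =
      K * ((B/2)⁻¹ * Real.exp (-(B/2)/T)) := by
    rw [integral_const_mul, hval]
  have hfin : K * ((B/2)⁻¹ * Real.exp (-(B/2)/T)) =
      2 * M * B⁻¹ * T ^ ((2:ℝ)-d) * Real.exp (-B/T) := by
    have he : Real.exp (-(B/2)/T) * Real.exp (-(B/2)/T) = Real.exp (-B/T) := by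
      rw [← Real.exp_add]; congr 1; ring
    have hBinv : ((B/2):ℝ)⁻¹ = 2 * B⁻¹ := by
      rw [inv_div]; ring
    rw [hK, hBinv]
    calc M * T ^ ((2:ℝ)-d) * Real.exp (-(B/2)/T) * (2 * B⁻¹ * Real.exp (-(B/2)/T))
        = 2 * M * B⁻¹ * T ^ ((2:ℝ)-d) *
          (Real.exp (-(B/2)/T) * Real.exp (-(B/2)/T)) := by ring
      _ = 2 * M * B⁻¹ * T ^ ((2:ℝ)-d) * Real.exp (-B/T) := by rw [he]
  rw [hcalc, hfin] at hle
  exact hle
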